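/- (Theorem 2.) For every s ∈ {1,…,m}, the sparsity constrained kernel SVM problem (SSVM) admits a global minimizer; that is, there exists α* ∈ ℝ^m with ⟨α*, y⟩ = 0 and ‖α*‖₀ ≤ s such that D(α*) ≤ D(α) for every α ∈ ℝ^m satisfying ⟨α, y⟩ = 0 and ‖α‖₀ ≤ s. -/

import Mathlib

noncomputable section

open Finset Matrix

/-- Euclidean (ℓ₂) norm of a vector in ℝ^m. -/
def l2enorm {m : ℕ} (v : Fin m → ℝ) : ℝ := Real.sqrt (∑ i, (v i) ^ 2)

/-- The zero "norm": number of nonzero entries. -/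
def zeroNorm {m : ℕ} (α : Fin m → ℝ) : ℕ := {i | α i ≠ 0}.ncard

/-- The soft-margin loss ℓ_{cC}. -/
def softLoss (c C t : ℝ) : ℝ := if 0 ≤ t then C * t ^ 2 / 2 else c * t ^ 2 / 2

/-- The dual penalty h_{cC}. -/
def hLoss (c C t : ℝ) : ℝ := if 0 ≤ t then t ^ 2 / (2 * C) else t ^ 2 / (2 * c)

/-- The matrix Q whose j-th column is y_j · x_j. -/
def Qmat {m n : ℕ} (x : Fin m → Fin n → ℝ) (y : Fin m → ℝ) : Matrix (Fin n) (Fin m) ℝ :=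
  Matrix.of fun i j => y j * x j i

/-- The diagonal matrix E(α). -/
def Emat {m : ℕ} (c C : ℝ) (α : Fin m → ℝ) : Matrix (Fin m) (Fin m) ℝ :=
  Matrix.diagonal fun i => if 0 ≤ α i then 1 / C else 1 / c

/-- The Hessian H(α) = QᵀQ + E(α). -/
def Hmat {m n : ℕ} (c C : ℝ) (x : Fin m → Fin n → ℝ) (y : Fin m → ℝ) (α : Fin m → ℝ) :
    Matrix (Fin m) (Fin m) ℝ :=
  (Qmat x y)ᵀ * Qmat x y + Emat c C α

/-- The dual objective D(α) = (1/2)‖Qα‖² + (1/2)⟨E(α)α, α⟩ − ⟨1, α⟩. -/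
def Dfun {m n : ℕ} (c C : ℝ) (x : Fin m → Fin n → ℝ) (y : Fin m → ℝ) (α : Fin m → ℝ) : ℝ :=
  (1 / 2) * ∑ i, ((Qmat x y).mulVec α i) ^ 2
    + (1 / 2) * ∑ i, ((Emat c C α).mulVec α i) * α i
    - ∑ i, α i

/-- g(α, b) = H(α)α − 1 + b·y. -/
def gfun {m n : ℕ} (c C : ℝ) (x : Fin m → Fin n → ℝ) (y : Fin m → ℝ)
    (α : Fin m → ℝ) (b : ℝ) : Fin m → ℝ :=
  (Hmat c C x y α).mulVec α - (fun _ => (1 : ℝ)) + b • y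

/-- The hard-thresholding operator ℙ_s(α): minimizers of ‖u − α‖ over ‖u‖₀ ≤ s. -/
def hardThr {m : ℕ} (s : ℕ) (α : Fin m → ℝ) : Set (Fin m → ℝ) :=
  {u | zeroNorm u ≤ s ∧ ∀ v : Fin m → ℝ, zeroNorm v ≤ s → l2enorm (u - α) ≤ l2enorm (v - α)}

/-- Feasibility for the sparsity constrained problem (SSVM). -/
def feasible {m : ℕ} (y : Fin m → ℝ) (s : ℕ) (α : Fin m → ℝ) : Prop :=
  ∑ i, α i * y i = 0 ∧ zeroNorm α ≤ s

/-- (α, b) is an η-stationary point of (SSVM). -/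
def etaStat {m n : ℕ} (c C : ℝ) (x : Fin m → Fin n → ℝ) (y : Fin m → ℝ) (s : ℕ) (η : ℝ)
    (α : Fin m → ℝ) (b : ℝ) : Prop :=
  α ∈ hardThr s (α - η • gfun c C x y α b) ∧ ∑ i, α i * y i = 0

/-- The family T_s(α) of index sets of s largest entries in magnitude. -/
def Tsets {m : ℕ} (s : ℕ) (α : Fin m → ℝ) : Set (Finset (Fin m)) :=
  {T | T.card = s ∧ ∀ i ∈ T, ∀ j ∉ T, |α j| ≤ |α i|}

/-- The s-th largest entry of (|α₁|, …, |α_m|). -/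
def sthLargest {m : ℕ} (s : ℕ) (α : Fin m → ℝ) : ℝ :=
  sSup {t : ℝ | s ≤ {i | t ≤ |α i|}.ncard}

/-- Euclidean distance between pairs (α, b) and (α', b') in ℝ^m × ℝ. -/
def pairDist {m : ℕ} (α : Fin m → ℝ) (b : ℝ) (α' : Fin m → ℝ) (b' : ℝ) : ℝ :=
  Real.sqrt ((∑ i, (α i - α' i) ^ 2) + (b - b') ^ 2)

/-- Spectral (operator) norm of a matrix w.r.t. Euclidean norms. -/
def specNorm {m n : ℕ} (Q : Matrix (Fin n) (Fin m) ℝ) : ℝ :=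
  ‖LinearMap.toContinuousLinearMap (Matrix.toEuclideanLin Q)‖

lemma gcont_aux (c C : ℝ) :
    Continuous (fun a : ℝ => (if 0 ≤ a then 1/C else 1/c) * a * a) := by
  have h : (fun a : ℝ => (if 0 ≤ a then 1/C else 1/c) * a * a)
      = fun a : ℝ => if (0:ℝ) ≤ a then 1/C * a * a else 1/c * a * a := by
    funext a; by_cases h : (0:ℝ) ≤ a <;> simp [h]
  rw [h]
  apply Continuous.if_le (by continuity) (by continuity) continuous_const continuous_id
  intro a ha
  have ha0 : a = 0 := ha.symm
  simp [ha0]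

lemma Dcont_aux {m n : ℕ} (c C : ℝ) (x : Fin m → Fin n → ℝ) (y : Fin m → ℝ) :
    Continuous (fun α => Dfun c C x y α) := by
  unfold Dfun
  apply Continuous.sub
  · apply Continuous.add
    · apply continuous_const.mul
      apply continuous_finset_sum; intro i _
      apply Continuous.pow
      simp only [Matrix.mulVec, dotProduct]
      exact continuous_finset_sum _ fun j _ => continuous_const.mul (continuous_apply j)
    · apply continuous_const.mul
      have h : (fun α : Fin m → ℝ => ∑ i, (Emat c C α).mulVec α i * α i)
          = fun α : Fin m → ℝ => ∑ i, (if 0 ≤ α i then 1/C else 1/c) * α i * α i := by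
        funext α; apply Finset.sum_congr rfl; intro i _
        simp [Emat, Matrix.mulVec_diagonal]
      rw [h]
      exact continuous_finset_sum _ fun i _ => (gcont_aux c C).comp (continuous_apply i)
  · exact continuous_finset_sum _ fun i _ => continuous_apply i

lemma closed_zeroNorm_aux {m : ℕ} (s : ℕ) :
    IsClosed {α : Fin m → ℝ | zeroNorm α ≤ s} := by
  classical
  have heq : {α : Fin m → ℝ | zeroNorm α ≤ s}
      = ⋃ T ∈ {T : Finset (Fin m) | T.card ≤ s}, {α | ∀ i ∉ T, α i = 0} := by
    ext α
    simp only [Set.mem_setOf_eq, Set.mem_iUnion, exists_prop]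
    constructor
    · intro h
      refine ⟨Finset.univ.filter (fun i => α i ≠ 0), ?_, ?_⟩
      · have : (Finset.univ.filter (fun i => α i ≠ 0) : Finset (Fin m)).card
            = zeroNorm α := by
          unfold zeroNorm
          rw [Set.ncard_eq_toFinset_card']
          congr 1
          ext i; simp
        omega
      · intro i hi
        by_contra hne
        exact hi (by simp [hne])
    · rintro ⟨T, hT, hsub⟩
      have hss : {i | α i ≠ 0} ⊆ (T : Set (Fin m)) := by
        intro i hi
        by_contra hni
        exact hi (hsub i hni)
      calc zeroNorm α ≤ (T : Set (Fin m)).ncard :=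
            Set.ncard_le_ncard hss T.finite_toSet
        _ = T.card := Set.ncard_coe_finset T
        _ ≤ s := hT
  rw [heq]
  apply Set.Finite.isClosed_biUnion (Set.toFinite _)
  intro T _
  have h2 : {α : Fin m → ℝ | ∀ i ∉ T, α i = 0}
      = ⋂ i ∈ {i | i ∉ T}, {α : Fin m → ℝ | α i = 0} := by
    ext α; simp
  rw [h2]
  exact isClosed_biInter fun i _ => isClosed_eq (continuous_apply i) continuous_const

lemma Dnonneg_aux {m n : ℕ} (hm : 1 ≤ m) {c C : ℝ} (hc : 0 < c) (hcC : c < C)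
    (x : Fin m → Fin n → ℝ) (y : Fin m → ℝ) (α : Fin m → ℝ)
    (hα : 2*C*m ≤ ‖α‖) : 0 ≤ Dfun c C x y α := by
  have hC : 0 < C := hc.trans hcC
  have hA : 0 ≤ ∑ i, ((Qmat x y).mulVec α i) ^ 2 :=
    Finset.sum_nonneg fun i _ => sq_nonneg _
  have hB : (1/C) * ∑ i, (α i)^2 ≤ ∑ i, (Emat c C α).mulVec α i * α i := by
    rw [Finset.mul_sum]
    apply Finset.sum_le_sum
    intro i _
    simp only [Emat, Matrix.mulVec_diagonal]
    have h1 : (1/C : ℝ) ≤ if 0 ≤ α i then 1/C else 1/c := by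
      split
      · exact le_rfl
      · exact one_div_le_one_div_of_le hc hcC.le
    nlinarith [sq_nonneg (α i), h1]
  -- sum α ≤ m * ‖α‖
  have hS1 : ∑ i, α i ≤ (m : ℝ) * ‖α‖ := by
    calc ∑ i, α i ≤ ∑ _i : Fin m, ‖α‖ := by
          apply Finset.sum_le_sum
          intro i _
          exact (le_abs_self _).trans ((Real.norm_eq_abs _) ▸ norm_le_pi_norm α i)
      _ = (m : ℝ) * ‖α‖ := by simp [mul_comm]
  -- ‖α‖^2 ≤ ∑ α_i^2
  have hne : (Finset.univ : Finset (Fin m)).Nonempty :=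
    Finset.univ_nonempty_iff.mpr ⟨⟨0, by omega⟩⟩
  obtain ⟨j, _, hj⟩ := Finset.exists_max_image Finset.univ (fun i => |α i|) hne
  have hnle : ‖α‖ ≤ |α j| := by
    rw [show |α j| = ‖α j‖ from rfl] at *
    apply pi_norm_le_iff_of_nonneg (norm_nonneg _) |>.mpr
    intro i; exact hj i (Finset.mem_univ i)
  have hS2 : ‖α‖^2 ≤ ∑ i, (α i)^2 := by
    have h1 : ‖α‖^2 ≤ (α j)^2 := by
      rw [← sq_abs (α j)]
      exact pow_le_pow_left₀ (norm_nonneg _) hnle 2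
    refine h1.trans ?_
    exact Finset.single_le_sum (fun i _ => sq_nonneg (α i)) (Finset.mem_univ j)
  have ht0 : (0:ℝ) ≤ ‖α‖ := norm_nonneg _
  have hm0 : (0:ℝ) ≤ (m:ℝ) := Nat.cast_nonneg m
  have h4 : (1/C)*‖α‖^2 ≤ (1/C) * ∑ i, (α i)^2 :=
    mul_le_mul_of_nonneg_left hS2 (le_of_lt (one_div_pos.mpr hC))
  have h5 : 2*(m:ℝ)*‖α‖ ≤ (1/C)*‖α‖^2 := by
    have hq : 2*C*(m:ℝ)*‖α‖ ≤ ‖α‖*‖α‖ := mul_le_mul_of_nonneg_right hα ht0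
    have hq2 := mul_le_mul_of_nonneg_left hq (le_of_lt (one_div_pos.mpr hC))
    calc 2*(m:ℝ)*‖α‖ = (1/C)*(2*C*(m:ℝ)*‖α‖) := by
          rw [one_div, inv_mul_eq_div, eq_div_iff hC.ne']; ring
      _ ≤ (1/C)*(‖α‖*‖α‖) := hq2
      _ = (1/C)*‖α‖^2 := by ring
  unfold Dfun
  linarith [hA, hB, h4, h5, hS1]

/-- the sparsity constrained problem (SSVM) admits a global minimizer. -/
theorem stmt_5 {m n : ℕ} (hm : 1 ≤ m) (hn : 1 ≤ n) (c C : ℝ) (hc : 0 < c) (hcC : c < C)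
    (x : Fin m → Fin n → ℝ) (y : Fin m → ℝ) (hy : ∀ i, y i = 1 ∨ y i = -1)
    (s : ℕ) (hs1 : 1 ≤ s) (hs2 : s ≤ m) :
    ∃ αstar : Fin m → ℝ, feasible y s αstar ∧
      ∀ α : Fin m → ℝ, feasible y s α → Dfun c C x y αstar ≤ Dfun c C x y α := by
  have hC : 0 < C := hc.trans hcC
  set R : ℝ := 2*C*m with hR
  have hSclosed : IsClosed {α : Fin m → ℝ | feasible y s α} := by
    have : {α : Fin m → ℝ | feasible y s α}
        = {α | ∑ i, α i * y i = 0} ∩ {α | zeroNorm α ≤ s} := by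
      ext α; simp [feasible, Set.mem_setOf_eq, Set.mem_inter_iff]
    rw [this]
    exact (isClosed_eq (continuous_finset_sum _ fun i _ =>
      (continuous_apply i).mul continuous_const) continuous_const).inter
      (closed_zeroNorm_aux s)
  have hKcomp : IsCompact ({α : Fin m → ℝ | feasible y s α} ∩ Metric.closedBall 0 R) :=
    (isCompact_closedBall (0 : Fin m → ℝ) R).inter_left hSclosed
  have h0feas : feasible y s (0 : Fin m → ℝ) := by
    constructor
    · simp
    · simp [zeroNorm]
  have h0mem : (0 : Fin m → ℝ) ∈ {α : Fin m → ℝ | feasible y s α} ∩ Metric.closedBall 0 R := by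
    refine ⟨h0feas, ?_⟩
    simp only [Metric.mem_closedBall, dist_self]
    positivity
  obtain ⟨αstar, hαK, hmin⟩ := hKcomp.exists_isMinOn ⟨0, h0mem⟩
    (Dcont_aux c C x y).continuousOn
  refine ⟨αstar, hαK.1, ?_⟩
  intro α hα
  by_cases hball : α ∈ Metric.closedBall (0 : Fin m → ℝ) R
  · exact hmin ⟨hα, hball⟩
  · have h1 : Dfun c C x y αstar ≤ Dfun c C x y 0 := hmin h0mem
    have h2 : Dfun c C x y (0 : Fin m → ℝ) = 0 := by
      simp [Dfun]
    have h3 : 0 ≤ Dfun c C x y α := by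
      apply Dnonneg_aux hm hc hcC
      have : R < ‖α‖ := by
        simpa [dist_zero_right] using hball
      linarith
    linarith
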